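/- Fix integers r ≥ 3 and L ≥ 1, and set K = rL. Let G be a graph equipped with an r-edge-colouring c such that: (1) every pair of distinct vertices of G is joined by at least rL independent r-paths; and (2) for no pair {v,w} of distinct vertices does the event A_{v,w} hold (with dangerous pairs defined relative to the colouring c and the constant K). Then rc(G) ≤ r, i.e., the edges of G admit a rainbow colouring with r colours. -/

import Mathlib

/-- The rainbow connection number of a graph: the least `k` such that the edges can be
coloured with `k` colours so that every pair of vertices is joined by a rainbow path. -/
noncomputable def rcn {V : Type*} (G : SimpleGraph V) : ℕ :=
  sInf {k : ℕ | ∃ c : Sym2 V → Fin k, ∀ v w : V,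
    ∃ P : G.Walk v w, P.IsPath ∧ (P.edges.map c).Nodup}

/-- The inner vertices of a walk, i.e. its support with the two endpoints removed. -/
def innerVerts {V : Type*} {G : SimpleGraph V} {a b : V} (P : G.Walk a b) : List V :=
  P.support.tail.dropLast

/-- A pair of vertices `x, y` is dangerous (w.r.t. the colouring `c` and the constant `K`)
if every family of pairwise independent rainbow `r`-paths joining `x` and `y` has at most
`K` members. -/
def Dangerous {V : Type*} (r : ℕ) (G : SimpleGraph V) (c : Sym2 V → Fin r) (K : ℕ)
    (x y : V) : Prop :=
  ∀ (m : ℕ) (P : Fin m → G.Walk x y),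
    (∀ i, (P i).IsPath ∧ (P i).length = r ∧ ((P i).edges.map c).Nodup) →
    (∀ i j, i ≠ j → ∀ z, z ∈ innerVerts (P i) → z ∉ innerVerts (P j)) →
    m ≤ K

/-- The event `A_{v,w}`: there are `L` independent `r`-paths `P₁, …, P_L` joining `v` and
`w` and `L` further `r`-paths `Q₁, …, Q_L` with endpoint pairs `{xᵢ, yᵢ}` such that
(i) each `Pᵢ` shares an edge with `Qᵢ`, (ii) the pairs `{xᵢ, yᵢ}` and `{v, w}` are
pairwise distinct, and (iii) every pair `{xᵢ, yᵢ}` is dangerous. -/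
def EventA {V : Type*} (r : ℕ) (G : SimpleGraph V) (c : Sym2 V → Fin r) (L K : ℕ)
    (v w : V) : Prop :=
  ∃ (P : Fin L → G.Walk v w) (x y : Fin L → V) (Q : ∀ i : Fin L, G.Walk (x i) (y i)),
    (∀ i, (P i).IsPath ∧ (P i).length = r) ∧
    (∀ i j, i ≠ j → ∀ z, z ∈ innerVerts (P i) → z ∉ innerVerts (P j)) ∧
    (∀ i, (Q i).IsPath ∧ (Q i).length = r) ∧
    (∀ i, ∃ e, e ∈ (P i).edges ∧ e ∈ (Q i).edges) ∧
    (∀ i j, i ≠ j → s(x i, y i) ≠ s(x j, y j)) ∧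
    (∀ i, s(x i, y i) ≠ s(v, w)) ∧
    (∀ i, Dangerous r G c K (x i) (y i))

open SimpleGraph List

open scoped Classical

section Helpers

variable {V : Type*} {G : SimpleGraph V}

lemma mem_innerVerts_iff' {u w : V} {P : G.Walk u w} (hP : P.IsPath) {z : V} :
    z ∈ (P.support.tail.dropLast) ↔ z ∈ P.support ∧ z ≠ u ∧ z ≠ w := by
  have hsup : P.support = u :: P.support.tail := P.support_eq_cons
  have hnd : P.support.Nodup := hP.support_nodup
  have hund : u ∉ P.support.tail := by
    rw [hsup] at hnd; exact (List.nodup_cons.mp hnd).1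
  have htnd : P.support.tail.Nodup := by
    rw [hsup] at hnd; exact (List.nodup_cons.mp hnd).2
  rcases eq_or_ne P.support.tail [] with ht | ht
  · constructor
    · intro h; rw [ht] at h; simp at h
    · rintro ⟨hz, hzu, _⟩
      rw [hsup, ht] at hz; simp at hz; exact absurd hz hzu
  · have hlast : P.support.tail.getLast ht = w := by
      exact (List.getLast_tail ht).trans ((List.getLast_congr _ _ rfl).trans P.getLast_support)
    have hdecomp : P.support.tail = P.support.tail.dropLast ++ [w] := by
      conv_lhs => rw [← List.dropLast_append_getLast ht]
      rw [hlast]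
    have hwnd : w ∉ P.support.tail.dropLast := by
      intro hmem
      have := htnd
      rw [hdecomp] at this
      exact (List.disjoint_of_nodup_append this) hmem (by simp)
    constructor
    · intro h
      refine ⟨?_, ?_, ?_⟩
      · rw [hsup]; right; exact List.dropLast_subset _ h
      · intro he; subst he; exact hund (List.dropLast_subset _ h)
      · intro he; subst he; exact hwnd h
    · rintro ⟨hz, hzu, hzw⟩
      rw [hsup] at hz
      rcases List.mem_cons.mp hz with h | h
      · exact absurd h hzu
      · rw [hdecomp] at h
        rcases List.mem_append.mp h with h | h
        · exact h
        · simp at h; exact absurd h hzw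

lemma ends_not_mem_edges {u w : V} {P : G.Walk u w} (hP : P.IsPath) (hlen : 2 ≤ P.length) :
    s(u, w) ∉ P.edges := by
  cases P with
  | nil => simp
  | cons h q =>
    rename_i x
    intro hmem
    rw [SimpleGraph.Walk.edges_cons, List.mem_cons] at hmem
    have hq : q.IsPath := hP.of_cons
    rcases hmem with heq | hmem
    · rw [Sym2.eq_iff] at heq
      rcases heq with ⟨-, hw⟩ | ⟨hu, hw⟩
      · -- x = w, so q : Walk w w is a path, hence nil, length = 1 < 2
        subst hw
        have := (SimpleGraph.Walk.isPath_iff_eq_nil (p := q)).mp hq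
        subst this
        simp at hlen
      · exact absurd hu (G.ne_of_adj h)
    · have : u ∈ q.support := q.fst_mem_support_of_mem_edges hmem
      exact ((SimpleGraph.Walk.cons_isPath_iff h q).mp hP).2 this

lemma mem_innerVerts {u w : V} {P : G.Walk u w} (hP : P.IsPath) {z : V} :
    z ∈ innerVerts P ↔ z ∈ P.support ∧ z ≠ u ∧ z ≠ w :=
  mem_innerVerts_iff' hP

lemma edge_unique {r : ℕ} (hr : 2 ≤ r) {v w : V} {m : ℕ} (C : Fin m → G.Walk v w)
    (hC : ∀ j, (C j).IsPath ∧ (C j).length = r)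
    (hind : ∀ i j, i ≠ j → ∀ z, z ∈ innerVerts (C i) → z ∉ innerVerts (C j))
    {i j : Fin m} (hij : i ≠ j) {e : Sym2 V} (hei : e ∈ (C i).edges) :
    e ∉ (C j).edges := by
  intro hej
  induction e using Sym2.ind with
  | _ p q =>
    have hadj : G.Adj p q := (C i).adj_of_mem_edges hei
    have hpq : p ≠ q := G.ne_of_adj hadj
    have hpi : p ∈ (C i).support := (C i).fst_mem_support_of_mem_edges hei
    have hqi : q ∈ (C i).support := (C i).snd_mem_support_of_mem_edges hei
    have hpj : p ∈ (C j).support := (C j).fst_mem_support_of_mem_edges hej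
    have hqj : q ∈ (C j).support := (C j).snd_mem_support_of_mem_edges hej
    by_cases hp : p ≠ v ∧ p ≠ w
    · exact hind i j hij p ((mem_innerVerts (hC i).1).mpr ⟨hpi, hp.1, hp.2⟩)
        ((mem_innerVerts (hC j).1).mpr ⟨hpj, hp.1, hp.2⟩)
    by_cases hq : q ≠ v ∧ q ≠ w
    · exact hind i j hij q ((mem_innerVerts (hC i).1).mpr ⟨hqi, hq.1, hq.2⟩)
        ((mem_innerVerts (hC j).1).mpr ⟨hqj, hq.1, hq.2⟩)
    · -- both p and q are endpoints, so e = s(v,w)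
      push_neg at hp hq
      have hvw : s(p, q) = s(v, w) := by
        rcases Classical.em (p = v) with h1 | h1
        · have h2 : q = w := by
            rcases Classical.em (q = v) with h | h
            · exact absurd (h.trans h1.symm) hpq.symm
            · exact hq h
          rw [h1, h2]
        · have h1' : p = w := hp h1
          have h2 : q = v := by
            rcases Classical.em (q = v) with h | h
            · exact h
            · exact absurd ((hq h).trans h1'.symm) hpq.symm
          rw [h1', h2]
          exact Sym2.eq_swap
      rw [hvw] at hei
      exact ends_not_mem_edges (hC i).1 (by rw [(hC i).2]; exact hr) hei

lemma dangerous_symm {r : ℕ} {K : ℕ} {c : Sym2 V → Fin r} {x y : V}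
    (h : Dangerous r G c K x y) : Dangerous r G c K y x := by
  intro m P hP hind
  refine h m (fun i => (P i).reverse) (fun i => ?_) (fun i j hij z hi hj => ?_)
  · obtain ⟨h1, h2, h3⟩ := hP i
    refine ⟨h1.reverse, by simp [h2], ?_⟩
    rw [SimpleGraph.Walk.edges_reverse, List.map_reverse]
    exact List.nodup_reverse.mpr h3
  · have hi' : z ∈ innerVerts (P i) := by
      rw [mem_innerVerts ((hP i).1.reverse)] at hi
      rw [mem_innerVerts (hP i).1]
      rw [SimpleGraph.Walk.support_reverse, List.mem_reverse] at hi
      exact ⟨hi.1, hi.2.2, hi.2.1⟩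
    have hj' : z ∈ innerVerts (P j) := by
      rw [mem_innerVerts ((hP j).1.reverse)] at hj
      rw [mem_innerVerts (hP j).1]
      rw [SimpleGraph.Walk.support_reverse, List.mem_reverse] at hj
      exact ⟨hj.1, hj.2.2, hj.2.1⟩
    exact hind i j hij z hi' hj'

lemma card_share_le {r m : ℕ} (hr : 2 ≤ r) {v w : V} (C : Fin m → G.Walk v w)
    (hC : ∀ j, (C j).IsPath ∧ (C j).length = r)
    (hind : ∀ i j, i ≠ j → ∀ z, z ∈ innerVerts (C i) → z ∉ innerVerts (C j))
    (el : List (Sym2 V)) :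
    (Finset.univ.filter fun j => ∃ e, e ∈ (C j).edges ∧ e ∈ el).card ≤ el.length := by
  classical
  refine le_trans (Finset.card_le_card_of_injOn
    (fun j => if h : ∃ e, e ∈ (C j).edges ∧ e ∈ el then h.choose else s(v, v))
    (fun j hj => ?_) (fun j1 hj1 j2 hj2 heq => ?_)) el.toFinset_card_le
  · rw [Finset.mem_coe, Finset.mem_filter] at hj
    simp only [dif_pos hj.2]
    exact List.mem_toFinset.mpr hj.2.choose_spec.2
  · rw [Finset.mem_coe, Finset.mem_filter] at hj1 hj2
    simp only [dif_pos hj1.2, dif_pos hj2.2] at heq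
    by_contra hne
    exact edge_unique hr C hC hind hne hj1.2.choose_spec.1
      (heq ▸ hj2.2.choose_spec.1)

lemma extract_inj {α : Type*} [DecidableEq α] {m r L : ℕ} (hr : 0 < r) (hL : 1 ≤ L)
    (hm : r * (L - 1) < m) (f : Fin m → α)
    (hfib : ∀ p : α, (Finset.univ.filter fun j => f j = p).card ≤ r) :
    ∃ g : Fin L → Fin m, Function.Injective (f ∘ g) := by
  classical
  set I := Finset.univ.image f with hI
  have h1 : (Finset.univ : Finset (Fin m)).card
      = ∑ p ∈ I, (Finset.univ.filter fun j => f j = p).card :=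
    Finset.card_eq_sum_card_fiberwise (fun x _ => Finset.mem_image_of_mem f (Finset.mem_univ x))
  have hcard : m ≤ I.card * r := by
    have h2 : ∑ p ∈ I, (Finset.univ.filter fun j => f j = p).card ≤ I.card * r := by
      calc ∑ p ∈ I, (Finset.univ.filter fun j => f j = p).card
          ≤ I.card • r := Finset.sum_le_card_nsmul I _ r (fun p _ => hfib p)
        _ = I.card * r := by rw [smul_eq_mul]
    calc m = (Finset.univ : Finset (Fin m)).card := (Finset.card_fin m).symm
      _ = _ := h1
      _ ≤ I.card * r := h2
  have hLI : L ≤ I.card := by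
    by_contra hlt
    push_neg at hlt
    have h3 : I.card * r ≤ (L - 1) * r := Nat.mul_le_mul_right r (by omega)
    have h4 : r * (L - 1) = (L - 1) * r := Nat.mul_comm _ _
    omega
  obtain ⟨t, htI, htcard⟩ := Finset.exists_subset_card_eq hLI
  have e := t.equivFinOfCardEq htcard
  have hpre : ∀ p ∈ t, ∃ j : Fin m, f j = p := by
    intro p hp
    have := htI hp
    rw [hI, Finset.mem_image] at this
    obtain ⟨j, _, hj⟩ := this
    exact ⟨j, hj⟩
  choose pre hpre' using hpre
  refine ⟨fun i => pre (e.symm i).1 (e.symm i).2, fun i1 i2 h12 => ?_⟩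
  simp only [Function.comp] at h12
  rw [hpre' _ (e.symm i1).2, hpre' _ (e.symm i2).2] at h12
  exact e.symm.injective (Subtype.ext h12)

end Helpers

theorem rcn_le_of_no_eventA {V : Type*} [Fintype V] (r L : ℕ) (hr : 3 ≤ r) (hL : 1 ≤ L)
    (G : SimpleGraph V) (c : Sym2 V → Fin r)
    (h1 : ∀ v w : V, v ≠ w →
      ∃ P : Fin (r * L) → G.Walk v w,
        (∀ i, (P i).IsPath ∧ (P i).length = r) ∧
        (∀ i j, i ≠ j → ∀ z, z ∈ innerVerts (P i) → z ∉ innerVerts (P j)))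
    (h2 : ∀ v w : V, v ≠ w → ¬ EventA r G c L (r * L) v w) :
    rcn G ≤ r := by
  classical
  have hr2 : 2 ≤ r := by omega
  have hKpos : 0 < r * L := Nat.mul_pos (by omega) (by omega)
  have hrep : ∀ z : Sym2 V, ∃ p : V × V, z = s(p.1, p.2) := by
    intro z
    induction z using Sym2.ind with
    | _ a b => exact ⟨(a, b), rfl⟩
  choose ep hep using hrep
  let DP : Sym2 V → Prop := fun z => ∀ a b : V, z = s(a, b) → a ≠ b ∧ Dangerous r G c (r * L) a b
  let D : Finset (Sym2 V) := Finset.univ.filter DP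
  have hDmem : ∀ z, z ∈ D ↔ DP z := by
    intro z; simp [D]
  have hD : ∀ z ∈ D, (ep z).1 ≠ (ep z).2 ∧ Dangerous r G c (r * L) (ep z).1 (ep z).2 :=
    fun z hz => ((hDmem z).mp hz) (ep z).1 (ep z).2 (hep z)
  have hDin : ∀ a b : V, a ≠ b → Dangerous r G c (r * L) a b → s(a, b) ∈ D := by
    intro a b hab hd
    rw [hDmem]
    intro a' b' h'
    rw [Sym2.eq_iff] at h'
    rcases h' with ⟨h1', h2'⟩ | ⟨h1', h2'⟩
    · subst h1'; subst h2'; exact ⟨hab, hd⟩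
    · subst h1'; subst h2'; exact ⟨hab.symm, dangerous_symm hd⟩
  -- greedy selection of pairwise edge-disjoint representative paths for dangerous pairs
  have greedy : ∀ T : Finset (Sym2 V), T ⊆ D →
      ∃ R : (z : Sym2 V) → z ∈ D → G.Walk (ep z).1 (ep z).2,
        (∀ z (hz : z ∈ D), z ∈ T → (R z hz).IsPath ∧ (R z hz).length = r) ∧
        (∀ z (hz : z ∈ D) z' (hz' : z' ∈ D), z ∈ T → z' ∈ T → z ≠ z' →
          ∀ e, e ∈ (R z hz).edges → e ∉ (R z' hz').edges) := by
    intro T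
    induction T using Finset.induction_on with
    | empty =>
      intro _
      refine ⟨fun z hz => (h1 (ep z).1 (ep z).2 (hD z hz).1).choose ⟨0, hKpos⟩,
        fun z hz hzT => absurd hzT (Finset.notMem_empty z),
        fun z hz z' hz' hzT => absurd hzT (Finset.notMem_empty z)⟩
    | @insert z T hzT ih =>
      intro hsub
      have hTD : T ⊆ D := fun u hu => hsub (Finset.mem_insert_of_mem hu)
      obtain ⟨R, hR1, hR2⟩ := ih hTD
      have hzD : z ∈ D := hsub (Finset.mem_insert_self z T)
      obtain ⟨hABne, hDang⟩ := hD z hzD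
      obtain ⟨C, hC, hCind⟩ := h1 (ep z).1 (ep z).2 hABne
      have hgood : ∃ j, ∀ z' (hz' : z' ∈ D), z' ∈ T →
          ∀ e, e ∈ (C j).edges → e ∉ (R z' hz').edges := by
        by_contra hbad
        push_neg at hbad
        choose F hFD hFT eW heW1 heW2 using hbad
        have hfib : ∀ p : Sym2 V, (Finset.univ.filter fun j => F j = p).card ≤ r := by
          intro p
          by_cases hp : ∃ j, F j = p
          · obtain ⟨j0, hj0⟩ := hp
            have hpD : p ∈ D := hj0 ▸ hFD j0
            have hpT : p ∈ T := hj0 ▸ hFT j0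
            refine le_trans (Finset.card_le_card ?_)
              (le_trans (card_share_le hr2 C hC hCind (R p hpD).edges) ?_)
            · intro j hj
              rw [Finset.mem_filter] at hj ⊢
              refine ⟨hj.1, eW j, heW1 j, ?_⟩
              have hj2 := hj.2
              have : (R (F j) (hFD j)).edges = (R p hpD).edges := by
                subst hj2; rfl
              exact this ▸ heW2 j
            · rw [SimpleGraph.Walk.length_edges, (hR1 p hpD hpT).2]
          · push_neg at hp
            rw [Finset.filter_false_of_mem (fun j _ => hp j), Finset.card_empty]
            omega
        have hx : r * (L - 1) + r = r * L := by
          rw [← Nat.mul_succ]; congr 1; omega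
        have hmlt : r * (L - 1) < r * L := by omega
        obtain ⟨g, hg⟩ := extract_inj (show 0 < r by omega) hL hmlt F hfib
        have hginj : Function.Injective g := fun a b hab => hg (congrArg F hab)
        apply h2 (ep z).1 (ep z).2 hABne
        refine ⟨fun i => C (g i), fun i => (ep (F (g i))).1, fun i => (ep (F (g i))).2,
          fun i => R (F (g i)) (hFD (g i)), fun i => hC (g i), ?_, ?_, ?_, ?_, ?_, ?_⟩
        · intro i j hij
          exact hCind (g i) (g j) (fun h => hij (hginj h))
        · intro i
          exact hR1 _ (hFD (g i)) (hFT (g i))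
        · intro i
          exact ⟨eW (g i), heW1 (g i), heW2 (g i)⟩
        · intro i j hij heqs
          have : F (g i) = F (g j) := (hep _).trans (heqs.trans (hep _).symm)
          exact hij (hg this)
        · intro i heqs
          have : F (g i) = z := (hep _).trans (heqs.trans (hep z).symm)
          exact hzT (this ▸ hFT (g i))
        · intro i
          exact (hD _ (hFD (g i))).2
      obtain ⟨j, hj⟩ := hgood
      refine ⟨fun z'' hz'' => if h : z'' = z then h ▸ (C j) else R z'' hz'', ?_, ?_⟩
      · intro z'' hz'' hz''T
        rcases Finset.mem_insert.mp hz''T with h | h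
        · subst h
          simp only [dif_pos rfl]
          exact hC j
        · have hne : z'' ≠ z := fun he => hzT (he ▸ h)
          simp only [dif_neg hne]
          exact hR1 z'' hz'' h
      · intro z1 hz1 z2 hz2 h1T h2T h12 e he1
        rcases Finset.mem_insert.mp h1T with ha | ha <;>
          rcases Finset.mem_insert.mp h2T with hb | hb
        · exact absurd (ha.trans hb.symm) h12
        · subst ha
          have hne2 : z2 ≠ z1 := fun he => hzT (he ▸ hb)
          simp only [dif_pos rfl] at he1
          simp only [dif_neg hne2]
          exact hj z2 hz2 hb e he1
        · subst hb
          have hne1 : z1 ≠ z2 := fun he => hzT (he ▸ ha)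
          simp only [dif_neg hne1] at he1
          simp only [dif_pos rfl]
          intro he2
          exact hj z1 hz1 ha e he2 he1
        · have hne1 : z1 ≠ z := fun he => hzT (he ▸ ha)
          have hne2 : z2 ≠ z := fun he => hzT (he ▸ hb)
          simp only [dif_neg hne1] at he1
          simp only [dif_neg hne2]
          exact hR2 z1 hz1 z2 hz2 ha hb h12 e he1
  obtain ⟨R, hR1all, hR2all⟩ := greedy D (subset_refl D)
  have hR1 : ∀ z (hz : z ∈ D), (R z hz).IsPath ∧ (R z hz).length = r :=
    fun z hz => hR1all z hz hz
  have hR2 : ∀ z (hz : z ∈ D) z' (hz' : z' ∈ D), z ≠ z' →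
      ∀ e, e ∈ (R z hz).edges → e ∉ (R z' hz').edges :=
    fun z hz z' hz' => hR2all z hz z' hz' hz hz'
  have Redges_congr : ∀ (z1 z2 : Sym2 V) (hh1 : z1 ∈ D) (hh2 : z2 ∈ D),
      z1 = z2 → (R z1 hh1).edges = (R z2 hh2).edges := by
    rintro z1 z2 hh1 hh2 rfl; rfl
  have hcol : ∀ z (hz : z ∈ D) (e : Sym2 V), e ∈ (R z hz).edges →
      List.idxOf e (R z hz).edges < r := by
    intro z hz e he
    have := List.idxOf_lt_length_iff.mpr he
    rwa [SimpleGraph.Walk.length_edges, (hR1 z hz).2] at this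
  obtain ⟨cc, hccR, hccE⟩ : ∃ cc : Sym2 V → Fin r,
      (∀ z (hz : z ∈ D) (e : Sym2 V) (he : e ∈ (R z hz).edges),
        (cc e).val = List.idxOf e (R z hz).edges) ∧
      (∀ e : Sym2 V, (¬ ∃ z, ∃ hz : z ∈ D, e ∈ (R z hz).edges) → cc e = c e) := by
    refine ⟨fun e => if h : ∃ z, ∃ hz : z ∈ D, e ∈ (R z hz).edges then
      ⟨List.idxOf e (R h.choose h.choose_spec.choose).edges,
        hcol h.choose h.choose_spec.choose e h.choose_spec.choose_spec⟩ else c e, ?_, ?_⟩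
    · intro z hz e he
      have hex : ∃ z, ∃ hz : z ∈ D, e ∈ (R z hz).edges := ⟨z, hz, he⟩
      simp only [dif_pos hex]
      by_cases hch : hex.choose = z
      · show List.idxOf e (R hex.choose hex.choose_spec.choose).edges
          = List.idxOf e (R z hz).edges
        rw [Redges_congr _ _ hex.choose_spec.choose hz hch]
      · exact absurd he (hR2 hex.choose hex.choose_spec.choose z hz hch e
          hex.choose_spec.choose_spec)
    · intro e h
      simp only [dif_neg h]
  have hrainbowR : ∀ z (hz : z ∈ D), ((R z hz).edges.map cc).Nodup := by
    intro z hz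
    have hnd : (R z hz).edges.Nodup := (hR1 z hz).1.edges_nodup
    refine List.Nodup.map_on ?_ hnd
    intro e1 hm1 e2 hm2 h12
    have hval := congrArg Fin.val h12
    rw [hccR z hz e1 hm1, hccR z hz e2 hm2] at hval
    have g1 := List.idxOf_lt_length_iff.mpr hm1
    have g2 := List.idxOf_lt_length_iff.mpr hm2
    have hfin : (⟨List.idxOf e1 (R z hz).edges, g1⟩ : Fin (R z hz).edges.length)
        = ⟨List.idxOf e2 (R z hz).edges, g2⟩ := Fin.ext hval
    calc e1 = (R z hz).edges.get ⟨List.idxOf e1 (R z hz).edges, g1⟩ :=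
          (List.idxOf_get g1).symm
      _ = (R z hz).edges.get ⟨List.idxOf e2 (R z hz).edges, g2⟩ := by rw [hfin]
      _ = e2 := List.idxOf_get g2
  have hconv : ∀ (x y v' w' : V) (hw : G.Walk x y), s(x, y) = s(v', w') → hw.IsPath →
      ((hw.edges.map cc).Nodup) →
      ∃ P : G.Walk v' w', P.IsPath ∧ ((P.edges.map cc).Nodup) := by
    intro x y v' w' hw heq hp hn
    rw [Sym2.eq_iff] at heq
    rcases heq with ⟨hh1, hh2⟩ | ⟨hh1, hh2⟩
    · subst hh1; subst hh2; exact ⟨hw, hp, hn⟩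
    · subst hh1; subst hh2
      refine ⟨hw.reverse, hp.reverse, ?_⟩
      rw [SimpleGraph.Walk.edges_reverse, List.map_reverse]
      exact List.nodup_reverse.mpr hn
  apply Nat.sInf_le
  refine ⟨cc, fun v w => ?_⟩
  by_cases hvw : v = w
  · subst hvw
    exact ⟨SimpleGraph.Walk.nil, SimpleGraph.Walk.IsPath.nil, by simp⟩
  by_cases hdang : Dangerous r G c (r * L) v w
  · have hzD : s(v, w) ∈ D := hDin v w hvw hdang
    exact hconv _ _ v w (R (s(v, w)) hzD) (hep (s(v, w))).symm (hR1 _ hzD).1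
      (hrainbowR _ hzD)
  · have hdang' := hdang
    unfold Dangerous at hdang'
    push_neg at hdang'
    obtain ⟨m, P, hP, hPind, hm⟩ := hdang'
    by_cases hgood : ∃ j, ∀ e, e ∈ (P j).edges → ¬ ∃ z, ∃ hz : z ∈ D, e ∈ (R z hz).edges
    · obtain ⟨j, hj⟩ := hgood
      refine ⟨P j, (hP j).1, ?_⟩
      have : (P j).edges.map cc = (P j).edges.map c :=
        List.map_congr_left (fun e he => hccE e (hj e he))
      rw [this]
      exact (hP j).2.2
    · push_neg at hgood
      exfalso
      choose eW heW1 F hFD heW2 using hgood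
      have hP' : ∀ j, (P j).IsPath ∧ (P j).length = r := fun j => ⟨(hP j).1, (hP j).2.1⟩
      have hfib : ∀ p : Sym2 V, (Finset.univ.filter fun j => F j = p).card ≤ r := by
        intro p
        by_cases hp : ∃ j, F j = p
        · obtain ⟨j0, hj0⟩ := hp
          have hpD : p ∈ D := hj0 ▸ hFD j0
          refine le_trans (Finset.card_le_card ?_)
            (le_trans (card_share_le hr2 P hP' hPind (R p hpD).edges) ?_)
          · intro j hj
            rw [Finset.mem_filter] at hj ⊢
            refine ⟨hj.1, eW j, heW1 j, ?_⟩
            have hj2 := hj.2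
            have : (R (F j) (hFD j)).edges = (R p hpD).edges := by
              subst hj2; rfl
            exact this ▸ heW2 j
          · rw [SimpleGraph.Walk.length_edges, (hR1 p hpD).2]
        · push_neg at hp
          rw [Finset.filter_false_of_mem (fun j _ => hp j), Finset.card_empty]
          omega
      have hx : r * (L - 1) + r = r * L := by
        rw [← Nat.mul_succ]; congr 1; omega
      have hmlt : r * (L - 1) < m := by omega
      obtain ⟨g, hg⟩ := extract_inj (show 0 < r by omega) hL hmlt F hfib
      have hginj : Function.Injective g := fun a b hab => hg (congrArg F hab)
      apply h2 v w hvw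
      refine ⟨fun i => P (g i), fun i => (ep (F (g i))).1, fun i => (ep (F (g i))).2,
        fun i => R (F (g i)) (hFD (g i)), fun i => hP' (g i), ?_, ?_, ?_, ?_, ?_, ?_⟩
      · intro i j hij
        exact hPind (g i) (g j) (fun h => hij (hginj h))
      · intro i
        exact hR1 _ (hFD (g i))
      · intro i
        exact ⟨eW (g i), heW1 (g i), heW2 (g i)⟩
      · intro i j hij heqs
        have : F (g i) = F (g j) := (hep _).trans (heqs.trans (hep _).symm)
        exact hij (hg this)
      · intro i heqs
        have hFvw : F (g i) = s(v, w) := (hep _).trans heqs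
        have hDP : DP (F (g i)) := (hDmem _).mp (hFD (g i))
        exact hdang ((hDP v w hFvw).2)
      · intro i
        exact (hD _ (hFD (g i))).2
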